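/- Let b ∈ L^∞(ℝ^d) be non-negative, let n ∈ ℕ*, (x_n, ν_n) ∈ ℝ^d × S^{d-1}, and 0 < r_n ≤ 1/n. Suppose (1/(2n)) ∫_{-n}^{n} (b ∗ κ_{r_n})(x_n + t ν_n) dt ≤ 2^{-n}, where κ_r = r^{-d}|B_1(0)|^{-1} 𝟙_{B_r(0)}. Then, with the cylinder 𝒞_n = {y : dist(y − x_n, ℝν_n) ≤ (√3/2) r_n, |(y − x_n)·ν_n| ≤ n/2}, one has ∫_{𝒞_n} b(y) dy ≤ 2 |B_1(0)| n r_n^{d-1} 2^{-n}. -/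

import Mathlib

open MeasureTheory Metric Filter Set

/-- The normalized indicator of the ball of radius `r`. -/
noncomputable def kappa (d : ℕ) (r : ℝ) (x : EuclideanSpace ℝ (Fin d)) : ℝ :=
  if ‖x‖ < r then ((volume (ball (0 : EuclideanSpace ℝ (Fin d)) 1)).toReal * r ^ d)⁻¹ else 0

/-- Convolution `b ∗ κ_r`. -/
noncomputable def convK {d : ℕ} (b : EuclideanSpace ℝ (Fin d) → ℝ) (r : ℝ)
    (x : EuclideanSpace ℝ (Fin d)) : ℝ :=
  ∫ y, b y * kappa d r (x - y)

set_option maxHeartbeats 1000000 in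
theorem stmt4 {d : ℕ} (b : EuclideanSpace ℝ (Fin d) → ℝ)
    (hbmeas : Measurable b) (hbd : MemLp b ⊤ volume) (hbnn : ∀ x, 0 ≤ b x)
    (n : ℕ) (hn : 1 ≤ n) (xn νn : EuclideanSpace ℝ (Fin d)) (hν : ‖νn‖ = 1)
    (rn : ℝ) (hr0 : 0 < rn) (hr1 : rn ≤ 1 / n)
    (havg : (2 * (n : ℝ))⁻¹ * ∫ t in (-(n : ℝ))..(n : ℝ),
        convK b rn (xn + t • νn) ≤ (1 / 2 : ℝ) ^ n) :
    ∫ y in {y : EuclideanSpace ℝ (Fin d) |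
        Metric.infDist (y - xn) (Submodule.span ℝ {νn} : Submodule ℝ _) ≤
          Real.sqrt 3 / 2 * rn ∧ |(inner ℝ (y - xn) νn : ℝ)| ≤ (n : ℝ) / 2},
      b y ≤
    2 * (volume (ball (0 : EuclideanSpace ℝ (Fin d)) 1)).toReal * n * rn ^ (d - 1)
      * (1 / 2 : ℝ) ^ n := by
  classical
  -- dimension is at least 1
  have hd : 1 ≤ d := by
    by_contra h
    push_neg at h
    interval_cases d
    · haveI : Subsingleton (EuclideanSpace ℝ (Fin 0)) :=
        ⟨fun a b => PiLp.ext fun i => i.elim0⟩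
      have : νn = 0 := Subsingleton.elim νn 0
      rw [this, norm_zero] at hν
      norm_num at hν
  haveI : Nontrivial (EuclideanSpace ℝ (Fin d)) := by
    have : Nonempty (Fin d) := ⟨⟨0, hd⟩⟩
    infer_instance
  have hnpos : (0 : ℝ) < n := by exact_mod_cast hn
  set V : ℝ := (volume (ball (0 : EuclideanSpace ℝ (Fin d)) 1)).toReal with hVdef
  have hVpos : 0 < V :=
    ENNReal.toReal_pos (measure_ball_pos volume 0 one_pos).ne' measure_ball_lt_top.ne
  have hrd : 0 < rn ^ d := pow_pos hr0 d
  set c : ℝ := (V * rn ^ d)⁻¹ with hcdef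
  have hcpos : 0 < c := inv_pos.2 (mul_pos hVpos hrd)
  have hkdef : ∀ x : EuclideanSpace ℝ (Fin d),
      kappa d rn x = if ‖x‖ < rn then c else 0 := fun x => rfl
  have hK0 : ∀ x, 0 ≤ kappa d rn x := by
    intro x; rw [hkdef]; split
    · exact hcpos.le
    · exact le_rfl
  have hKmeas : Measurable (kappa d rn) := by
    unfold kappa
    exact Measurable.ite ((isOpen_lt continuous_norm continuous_const).measurableSet)
      measurable_const measurable_const
  -- essential bound on b
  obtain ⟨M, hM0, hMae⟩ : ∃ M : ℝ, 0 ≤ M ∧ ∀ᵐ y, b y ≤ M := by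
    refine ⟨(eLpNormEssSup b volume).toReal, ENNReal.toReal_nonneg, ?_⟩
    have hfin : eLpNormEssSup b volume ≠ ⊤ := by
      have := hbd.2
      rwa [eLpNorm_exponent_top, lt_top_iff_ne_top] at this
    filter_upwards [ae_le_eLpNormEssSup (f := b) (μ := volume)] with y hy
    have h1 : ‖b y‖ ≤ (eLpNormEssSup b volume).toReal := by
      have := ENNReal.toReal_mono hfin hy
      simpa using this
    exact (le_abs_self _).trans (by rwa [Real.norm_eq_abs] at h1)
  -- the translated kernel as an indicator
  have hKind : ∀ z : EuclideanSpace ℝ (Fin d),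
      (fun y => kappa d rn (z - y)) = (ball z rn).indicator (fun _ => c) := by
    intro z; funext y
    rw [hkdef]
    by_cases h : y ∈ ball z rn
    · rw [indicator_of_mem h, if_pos]
      rw [mem_ball, dist_eq_norm] at h
      rwa [norm_sub_rev]
    · rw [indicator_of_notMem h, if_neg]
      rw [mem_ball, dist_eq_norm] at h
      rwa [norm_sub_rev z y]
  have hKint : ∀ z, Integrable (fun y => kappa d rn (z - y)) := by
    intro z; rw [hKind z]
    exact (integrable_indicator_iff measurableSet_ball).2
      (integrableOn_const measure_ball_lt_top.ne)
  have hKsum : ∀ z : EuclideanSpace ℝ (Fin d), ∫ y, kappa d rn (z - y) = 1 := by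
    intro z
    rw [hKind z, integral_indicator measurableSet_ball]
    rw [setIntegral_const]
    rw [measureReal_def, Measure.addHaar_ball volume z hr0.le, finrank_euclideanSpace_fin]
    rw [ENNReal.toReal_mul, ENNReal.toReal_ofReal hrd.le]
    rw [smul_eq_mul, hcdef, ← hVdef]
    field_simp
  -- integrability of the slices
  have hint : ∀ z : EuclideanSpace ℝ (Fin d),
      Integrable (fun y => b y * kappa d rn (z - y)) := by
    intro z
    refine Integrable.mono' ((hKint z).const_mul M) ?_ ?_
    · exact (hbmeas.mul (hKmeas.comp (measurable_const.sub measurable_id))).aestronglyMeasurable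
    · filter_upwards [hMae] with y hy
      rw [Real.norm_eq_abs, abs_of_nonneg (mul_nonneg (hbnn y) (hK0 _))]
      exact mul_le_mul_of_nonneg_right hy (hK0 _)
  have hconv_nn : ∀ z, 0 ≤ convK b rn z := fun z =>
    integral_nonneg fun y => mul_nonneg (hbnn y) (hK0 _)
  have hconv_le : ∀ z, convK b rn z ≤ M := by
    intro z
    have h1 : convK b rn z ≤ ∫ y, M * kappa d rn (z - y) := by
      refine integral_mono_ae (hint z) ((hKint z).const_mul M) ?_
      filter_upwards [hMae] with y hy
      exact mul_le_mul_of_nonneg_right hy (hK0 _)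
    calc convK b rn z ≤ ∫ y, M * kappa d rn (z - y) := h1
      _ = M * ∫ y, kappa d rn (z - y) := integral_const_mul M _
      _ = M := by rw [hKsum z, mul_one]
  -- measurability of convK
  have hconvmeas : Measurable (convK b rn) := by
    have h : StronglyMeasurable fun p : EuclideanSpace ℝ (Fin d) × EuclideanSpace ℝ (Fin d) =>
        b p.2 * kappa d rn (p.1 - p.2) :=
      ((hbmeas.comp measurable_snd).mul
        (hKmeas.comp (measurable_fst.sub measurable_snd))).stronglyMeasurable
    exact h.integral_prod_right'.measurable
  -- lintegral form of convK
  have hB : ∀ z : EuclideanSpace ℝ (Fin d),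
      ∫⁻ y, ENNReal.ofReal (b y * kappa d rn (z - y)) = ENNReal.ofReal (convK b rn z) := by
    intro z
    exact (ofReal_integral_eq_lintegral_ofReal (hint z)
      (ae_of_all _ fun y => mul_nonneg (hbnn y) (hK0 _))).symm
  -- hypothesis on the Ioc integral
  have hIoc : ∫ t in Ioc (-(n : ℝ)) n, convK b rn (xn + t • νn) ≤ 2 * n * (1 / 2 : ℝ) ^ n := by
    rw [intervalIntegral.integral_of_le (by linarith : -(n : ℝ) ≤ n)] at havg
    have h2 : (0 : ℝ) < 2 * n := by linarith
    have := mul_le_mul_of_nonneg_left havg h2.le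
    rwa [← mul_assoc, mul_inv_cancel₀ h2.ne', one_mul] at this
  -- integrability of t ↦ convK (xn + t νn) on Ioc
  have hE : IntegrableOn (fun t : ℝ => convK b rn (xn + t • νn)) (Ioc (-(n : ℝ)) n) := by
    refine Integrable.mono' (g := fun _ => M)
      (integrableOn_const measure_Ioc_lt_top.ne) ?_
      (ae_of_all _ fun t => ?_)
    · exact ((hconvmeas.comp
        ((continuous_const.add (continuous_id.smul continuous_const)).measurable))).aestronglyMeasurable.restrict
    · rw [Real.norm_eq_abs, abs_of_nonneg (hconv_nn _)]
      exact hconv_le _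
  have hG : ∫⁻ t in Ioc (-(n : ℝ)) n, ENNReal.ofReal (convK b rn (xn + t • νn)) ≤
      ENNReal.ofReal (2 * n * (1 / 2 : ℝ) ^ n) := by
    rw [← ofReal_integral_eq_lintegral_ofReal hE (ae_of_all _ fun t => hconv_nn _)]
    exact ENNReal.ofReal_le_ofReal hIoc
  -- Tonelli
  have hswap : ∫⁻ y, ∫⁻ t in Ioc (-(n : ℝ)) n,
        ENNReal.ofReal (b y * kappa d rn (xn + t • νn - y)) =
      ∫⁻ t in Ioc (-(n : ℝ)) n, ∫⁻ y,
        ENNReal.ofReal (b y * kappa d rn (xn + t • νn - y)) := by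
    refine lintegral_lintegral_swap ?_
    refine (Measurable.aemeasurable ?_)
    apply ENNReal.measurable_ofReal.comp
    exact (hbmeas.comp measurable_fst).mul
      (hKmeas.comp (((measurable_const.add (measurable_snd.smul measurable_const))).sub
        measurable_fst))
  -- the cylinder
  set 𝒞 : Set (EuclideanSpace ℝ (Fin d)) := {y : EuclideanSpace ℝ (Fin d) |
      Metric.infDist (y - xn) (Submodule.span ℝ {νn} : Submodule ℝ _) ≤
        Real.sqrt 3 / 2 * rn ∧ |(inner ℝ (y - xn) νn : ℝ)| ≤ (n : ℝ) / 2} with h𝒞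
  have hCmeas : MeasurableSet 𝒞 := by
    have h1 : IsClosed {y : EuclideanSpace ℝ (Fin d) |
        Metric.infDist (y - xn) (Submodule.span ℝ {νn} : Submodule ℝ _) ≤
          Real.sqrt 3 / 2 * rn} :=
      isClosed_le ((continuous_infDist_pt _).comp (continuous_id.sub continuous_const))
        continuous_const
    have h2 : IsClosed {y : EuclideanSpace ℝ (Fin d) |
        |(inner ℝ (y - xn) νn : ℝ)| ≤ (n : ℝ) / 2} :=
      isClosed_le (continuous_abs.comp
        ((continuous_id.sub continuous_const).inner continuous_const)) continuous_const
    have : 𝒞 = {y : EuclideanSpace ℝ (Fin d) |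
        Metric.infDist (y - xn) (Submodule.span ℝ {νn} : Submodule ℝ _) ≤
          Real.sqrt 3 / 2 * rn} ∩ {y : EuclideanSpace ℝ (Fin d) |
        |(inner ℝ (y - xn) νn : ℝ)| ≤ (n : ℝ) / 2} := rfl
    rw [this]
    exact (h1.measurableSet).inter (h2.measurableSet)
  -- geometry: the kernel is maximal on a length rn interval
  have hgeom : ∀ y ∈ 𝒞, ∀ t ∈ Ioo ((inner ℝ (y - xn) νn : ℝ) - rn / 2)
      ((inner ℝ (y - xn) νn : ℝ) + rn / 2), ‖xn + t • νn - y‖ < rn := by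
    rintro y hy t ht
    obtain ⟨hy1, hy2⟩ := hy
    obtain ⟨ht1, ht2⟩ := ht
    set v : EuclideanSpace ℝ (Fin d) := y - xn with hv
    set s : ℝ := (inner ℝ v νn : ℝ) with hs
    set w : EuclideanSpace ℝ (Fin d) := v - s • νn with hw
    have hνν : (inner ℝ νn νn : ℝ) = 1 := by
      rw [real_inner_self_eq_norm_sq, hν]; norm_num
    have hwv : (inner ℝ w νn : ℝ) = 0 := by
      rw [hw, inner_sub_left, real_inner_smul_left, hνν, mul_one, sub_self]
    -- sνn is the closest point on the line
    have hwle : ‖w‖ ≤ Real.sqrt 3 / 2 * rn := by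
      refine le_trans ?_ hy1
      by_contra hcon
      push_neg at hcon
      obtain ⟨p, hp, hdp⟩ := (infDist_lt_iff ⟨0, Submodule.zero_mem _⟩).1 hcon
      obtain ⟨a, rfl⟩ := Submodule.mem_span_singleton.1 hp
      have hexp : ‖v - a • νn‖ ^ 2 = ‖w‖ ^ 2 + (s - a) ^ 2 := by
        have h3 : v - a • νn = w + (s - a) • νn := by rw [hw]; module
        rw [h3, norm_add_sq_real, real_inner_smul_right, hwv, mul_zero, mul_zero,
          norm_smul, hν, mul_one, Real.norm_eq_abs, sq_abs]
        ring
      rw [dist_eq_norm] at hdp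
      nlinarith [norm_nonneg (v - a • νn), norm_nonneg w]
    have hw2 : ‖w‖ ^ 2 ≤ 3 / 4 * rn ^ 2 := by
      nlinarith [Real.sq_sqrt (show (0 : ℝ) ≤ 3 by norm_num), Real.sqrt_nonneg 3,
        norm_nonneg w, hr0]
    have hxty : xn + t • νn - y = (t - s) • νn - w := by
      rw [hw, hv]; module
    have hsq : ‖xn + t • νn - y‖ ^ 2 = (t - s) ^ 2 + ‖w‖ ^ 2 := by
      rw [hxty, norm_sub_sq_real, real_inner_smul_left, real_inner_comm, hwv, mul_zero,
        mul_zero, norm_smul, hν, mul_one, Real.norm_eq_abs, sq_abs]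
      ring
    have htd : (t - s) ^ 2 < rn ^ 2 / 4 := by nlinarith
    nlinarith [norm_nonneg (xn + t • νn - y), hr0]
  -- lower bound for the inner lintegral when y is in the cylinder
  have hlow : ∀ y ∈ 𝒞, ENNReal.ofReal (b y * c) * ENNReal.ofReal rn ≤
      ∫⁻ t in Ioc (-(n : ℝ)) n, ENNReal.ofReal (b y * kappa d rn (xn + t • νn - y)) := by
    intro y hy
    set s : ℝ := (inner ℝ (y - xn) νn : ℝ) with hs
    have hrn1 : rn ≤ 1 := hr1.trans (by
      rw [div_le_one hnpos]; exact_mod_cast hn)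
    have hsub : Ioo (s - rn / 2) (s + rn / 2) ⊆ Ioc (-(n : ℝ)) n := by
      intro t ht
      have habs := abs_le.1 hy.2
      have hn1 : (1 : ℝ) ≤ n := by exact_mod_cast hn
      obtain ⟨ht1, ht2⟩ := ht
      constructor
      · rw [← hs] at habs
        linarith [habs.1]
      · rw [← hs] at habs
        linarith [habs.2]
    calc ENNReal.ofReal (b y * c) * ENNReal.ofReal rn
        = ∫⁻ _ in Ioo (s - rn / 2) (s + rn / 2), ENNReal.ofReal (b y * c) := by
          rw [setLIntegral_const, Real.volume_Ioo]
          congr 2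
          ring
      _ = ∫⁻ t in Ioo (s - rn / 2) (s + rn / 2),
            ENNReal.ofReal (b y * kappa d rn (xn + t • νn - y)) := by
          refine setLIntegral_congr_fun measurableSet_Ioo (fun t ht => ?_)
          rw [hkdef, if_pos (hgeom y hy t ht)]
      _ ≤ ∫⁻ t in Ioc (-(n : ℝ)) n,
            ENNReal.ofReal (b y * kappa d rn (xn + t • νn - y)) :=
          lintegral_mono_set hsub
  -- the algebraic identity
  have hpow : rn ^ (d - 1) * rn = rn ^ d := by
    rw [← pow_succ, Nat.sub_add_cancel hd]
  set R : ℝ := V * rn ^ (d - 1) with hRdef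
  have hRpos : 0 < R := mul_pos hVpos (pow_pos hr0 _)
  have hcr : ∀ y : EuclideanSpace ℝ (Fin d), b y = R * (b y * c * rn) := by
    intro y
    have hne : V * rn ^ d ≠ 0 := (mul_pos hVpos hrd).ne'
    rw [hRdef, hcdef]
    field_simp
    rw [← hpow]
    ring
  -- main lintegral estimate
  have hmain : ∫⁻ y in 𝒞, ENNReal.ofReal (b y) ≤
      ENNReal.ofReal R * ENNReal.ofReal (2 * n * (1 / 2 : ℝ) ^ n) := by
    calc ∫⁻ y in 𝒞, ENNReal.ofReal (b y)
        ≤ ∫⁻ y in 𝒞, ENNReal.ofReal R * ∫⁻ t in Ioc (-(n : ℝ)) n,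
            ENNReal.ofReal (b y * kappa d rn (xn + t • νn - y)) := by
          refine setLIntegral_mono' hCmeas fun y hy => ?_
          have h1 : ENNReal.ofReal (b y) =
              ENNReal.ofReal R * (ENNReal.ofReal (b y * c) * ENNReal.ofReal rn) := by
            rw [← ENNReal.ofReal_mul (mul_nonneg (hbnn y) hcpos.le),
              ← ENNReal.ofReal_mul hRpos.le]
            congr 1
            exact hcr y
          rw [h1]
          exact mul_le_mul_right (hlow y hy) _
      _ ≤ ∫⁻ y, ENNReal.ofReal R * ∫⁻ t in Ioc (-(n : ℝ)) n,
            ENNReal.ofReal (b y * kappa d rn (xn + t • νn - y)) :=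
          setLIntegral_le_lintegral _ _
      _ = ENNReal.ofReal R * ∫⁻ y, ∫⁻ t in Ioc (-(n : ℝ)) n,
            ENNReal.ofReal (b y * kappa d rn (xn + t • νn - y)) :=
          lintegral_const_mul' _ _ ENNReal.ofReal_ne_top
      _ = ENNReal.ofReal R * ∫⁻ t in Ioc (-(n : ℝ)) n, ∫⁻ y,
            ENNReal.ofReal (b y * kappa d rn (xn + t • νn - y)) := by rw [hswap]
      _ = ENNReal.ofReal R * ∫⁻ t in Ioc (-(n : ℝ)) n,
            ENNReal.ofReal (convK b rn (xn + t • νn)) := by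
          congr 1
          exact lintegral_congr fun t => hB (xn + t • νn)
      _ ≤ ENNReal.ofReal R * ENNReal.ofReal (2 * n * (1 / 2 : ℝ) ^ n) :=
          mul_le_mul_right hG _
  -- conclude
  have hRHS : (0 : ℝ) ≤ 2 * V * n * rn ^ (d - 1) * (1 / 2 : ℝ) ^ n := by positivity
  have hlhs : ∫ y in 𝒞, b y = (∫⁻ y in 𝒞, ENNReal.ofReal (b y)).toReal :=
    integral_eq_lintegral_of_nonneg_ae (ae_of_all _ hbnn)
      hbmeas.aestronglyMeasurable.restrict
  rw [hlhs]
  refine ENNReal.toReal_le_of_le_ofReal hRHS (hmain.trans_eq ?_)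
  rw [← ENNReal.ofReal_mul hRpos.le]
  congr 1
  rw [hRdef]
  ring
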